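/- An identity u ≈ v holds in the six-element monoid Q^1 and in every idempotent monoid (i.e., every monoid satisfying x ≈ x²) if and only if u ≈ v is a consequence of Γ = {xtx ≈ xtx², xtx ≈ x²tx, (xy)² ≈ x²y²}. Equivalently, Q^1 ∨ B^1 = var Γ, where B^1 is the variety of all idempotent monoids. -/

import Mathlib

/-- A word over the fixed countably infinite alphabet ℕ. -/
abbrev Word : Type := List ℕ

/-- An identity `u ≈ v` is a pair of words. -/
abbrev Eqn : Type := Word × Word

/-- A monoid `M` satisfies the identity `e` if every evaluation of letters in `M`
gives the same value to both sides. -/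
def Satisfies (M : Type) [Monoid M] (e : Eqn) : Prop :=
  ∀ φ : ℕ → M, (e.1.map φ).prod = (e.2.map φ).prod

/-- A monoid `M` satisfies a set of identities `S` if it satisfies each member. -/
def SatisfiesSet (M : Type) [Monoid M] (S : Set Eqn) : Prop :=
  ∀ e ∈ S, Satisfies M e

/-- The identity `e` is a consequence of `S` (holds in the variety `var S`)
if every monoid satisfying `S` satisfies `e`. -/
def Consequence (S : Set Eqn) (e : Eqn) : Prop :=
  ∀ (M : Type) [Monoid M], SatisfiesSet M S → Satisfies M e

/-- The six-element monoid `Q¹ = {1, e, b, c, f, 0}`. -/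
inductive Q1 : Type
  | one | e | b | c | f | zero
deriving DecidableEq

instance : Fintype Q1 :=
  ⟨{.one, .e, .b, .c, .f, .zero}, by intro x; cases x <;> simp⟩

/-- Multiplication of `Q¹`: `e·e = e`, `e·b = b`, `c·e = c`, `b·c = f`,
`e·f = f·e = f`, and all remaining products of elements from `{e,b,c,f}` are `0`. -/
def Q1.mul : Q1 → Q1 → Q1
  | .one, x => x
  | x, .one => x
  | .e, .e => .e
  | .e, .b => .b
  | .c, .e => .c
  | .b, .c => .f
  | .e, .f => .f
  | .f, .e => .f
  | _, _ => .zero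

instance : Monoid Q1 where
  mul := Q1.mul
  one := Q1.one
  mul_assoc := by decide
  one_mul := by decide
  mul_one := by decide

/-- `Γ = {xtx ≈ xtx², xtx ≈ x²tx, (xy)² ≈ x²y²}`, with `x = 0`, `y = 1`, `t = 4`. -/
def Gamma : Set Eqn :=
  {([0, 4, 0], [0, 4, 0, 0]), ([0, 4, 0], [0, 0, 4, 0]), ([0, 1, 0, 1], [0, 0, 1, 1])}

/-- Γ-derivability: congruence generated by the three identity schemas
(with arbitrary word substitutions and contexts built in). -/
inductive D : Word → Word → Prop
  | r1 (A w t B : Word) : D (A ++ w ++ t ++ w ++ B) (A ++ w ++ t ++ w ++ w ++ B)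
  | r2 (A w t B : Word) : D (A ++ w ++ t ++ w ++ B) (A ++ w ++ w ++ t ++ w ++ B)
  | r3 (A w v B : Word) : D (A ++ w ++ v ++ w ++ v ++ B) (A ++ w ++ w ++ v ++ v ++ B)
  | refl (u : Word) : D u u
  | symm {u v : Word} : D u v → D v u
  | trans {u v w : Word} : D u v → D v w → D u w

/-- Band (idempotent) derivability: congruence generated by w ≈ ww. -/
inductive B : Word → Word → Prop
  | sq (w : Word) : B w (w ++ w)
  | refl (u : Word) : B u u
  | symm {u v : Word} : B u v → B v u
  | trans {u v w : Word} : B u v → B v w → B u w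
  | app {a b c d : Word} : B a b → B c d → B (a ++ c) (b ++ d)

theorem Bcon {u v : Word} (h : B u v) : ∀ z, z ∈ u ↔ z ∈ v := by
  induction h with
  | sq w => intro z; simp
  | refl u => intro z; rfl
  | symm _ ih => intro z; exact (ih z).symm
  | trans _ _ ih1 ih2 => intro z; exact (ih1 z).trans (ih2 z)
  | app _ _ ih1 ih2 => intro z; simp [ih1 z, ih2 z]

/-- covered square absorption -/
theorem T9Laux : ∀ (n : ℕ) (w X Y : Word), w.length ≤ n → (∀ z ∈ w, z ∈ X) →
    D (X ++ w ++ w ++ Y) (X ++ w ++ Y) := by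
  intro n
  induction n with
  | zero =>
    intro w X Y hlen _
    have : w = [] := List.eq_nil_of_length_eq_zero (Nat.le_zero.mp hlen)
    subst this; simpa using D.refl _
  | succ n ih =>
    intro w X Y hlen hcov
    match w with
    | [] => simpa using D.refl _
    | [z] =>
      have hz : z ∈ X := hcov z (by simp)
      obtain ⟨X1, X2, rfl⟩ := List.append_of_mem hz
      have := D.r1 X1 [z] X2 Y
      have h2 := this.symm
      -- goal : D (X1++[z]++X2 ++ [z] ++ [z] ++ Y) (X1++[z]++X2 ++ [z] ++ Y)
      simpa only [List.append_assoc, List.singleton_append, List.cons_append,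
        List.nil_append] using h2
    | z :: y :: rest =>
      set w1 : Word := [z] with hw1
      set w2 : Word := y :: rest with hw2
      have hc1 : ∀ a ∈ w1, a ∈ X := fun a ha => hcov a (by simp [hw1] at ha; simp [ha])
      have hc2 : ∀ a ∈ w2, a ∈ X := fun a ha => hcov a (by simp [hw2] at ha ⊢; rcases ha with h|h <;> simp [h])
      have step3 := D.r3 X w1 w2 Y
      -- D (X ++ w1 ++ w2 ++ w1 ++ w2 ++ Y) (X ++ w1 ++ w1 ++ w2 ++ w2 ++ Y)
      have hlen' : (z :: y :: rest).length ≤ n + 1 := hlen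
      have hle1 : w1.length ≤ n := by
        simp only [hw1, List.length_singleton]
        simp only [List.length_cons] at hlen'; omega
      have hle2 : w2.length ≤ n := by
        simp only [hw2, List.length_cons] at hlen' ⊢; omega
      have ih1 := ih w1 X (w2 ++ w2 ++ Y) hle1 hc1
      have ih2 := ih w2 (X ++ w1) Y hle2 (fun a ha => by simp [hc2 a ha])
      -- assemble
      have e1 : D (X ++ (z :: y :: rest) ++ (z :: y :: rest) ++ Y)
          (X ++ w1 ++ w1 ++ w2 ++ w2 ++ Y) := by
        have : X ++ (z :: y :: rest) ++ (z :: y :: rest) ++ Y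
            = X ++ w1 ++ w2 ++ w1 ++ w2 ++ Y := by
          simp [hw1, hw2, List.append_assoc]
        rw [this]; exact step3
      have e2 : D (X ++ w1 ++ w1 ++ w2 ++ w2 ++ Y) (X ++ w1 ++ w2 ++ w2 ++ Y) := by
        have := ih1
        simpa [List.append_assoc] using this
      have e3 : D (X ++ w1 ++ w2 ++ w2 ++ Y) (X ++ w1 ++ w2 ++ Y) := by
        simpa [List.append_assoc] using ih2
      have := (e1.trans e2).trans e3
      have heq : X ++ w1 ++ w2 ++ Y = X ++ (z :: y :: rest) ++ Y := by
        simp [hw1, hw2, List.append_assoc]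
      rw [heq] at this
      exact this

/-- In a fully left-covered region, band-equivalent words are Γ-interchangeable. -/
theorem T9L (w X Y : Word) (h : ∀ z ∈ w, z ∈ X) :
    D (X ++ w ++ w ++ Y) (X ++ w ++ Y) :=
  T9Laux w.length w X Y le_rfl h

theorem Bl {r s : Word} (h : B r s) :
    ∀ X Y : Word, (∀ z ∈ r, z ∈ X) → D (X ++ r ++ Y) (X ++ s ++ Y) := by
  induction h with
  | sq w =>
    intro X Y hc
    exact (by simpa [List.append_assoc] using (T9L w X Y hc).symm : D (X ++ w ++ Y) (X ++ (w ++ w) ++ Y))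
  | refl u => intro X Y _; exact D.refl _
  | symm h ih =>
    intro X Y hc
    exact (ih X Y (fun z hz => hc z ((Bcon h z).mp hz))).symm
  | trans h1 h2 ih1 ih2 =>
    intro X Y hc
    exact (ih1 X Y hc).trans (ih2 X Y (fun z hz => hc z ((Bcon h1 z).mpr hz)))
  | app h1 h2 ih1 ih2 =>
    rename_i a b c d
    intro X Y hc
    have step1 : D (X ++ a ++ (c ++ Y)) (X ++ b ++ (c ++ Y)) :=
      ih1 X (c ++ Y) (fun z hz => hc z (by simp [hz]))
    have step2 : D ((X ++ b) ++ c ++ Y) ((X ++ b) ++ d ++ Y) :=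
      ih2 (X ++ b) Y (fun z hz => by
        have := hc z (by simp [hz])
        simp [this])
    have : D (X ++ (a ++ c) ++ Y) (X ++ (b ++ c) ++ Y) := by
      simpa [List.append_assoc] using step1
    have h2' : D (X ++ (b ++ c) ++ Y) (X ++ (b ++ d) ++ Y) := by
      simpa [List.append_assoc] using step2
    exact this.trans h2'

def bsetoid : Setoid Word := ⟨B, B.refl, B.symm, B.trans⟩

def BM : Type := Quotient bsetoid

def BM.mk (w : Word) : BM := Quotient.mk bsetoid w

instance : Monoid BM where
  mul := Quotient.map₂ (· ++ ·) (fun _ _ h1 _ _ h2 => B.app h1 h2)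
  one := BM.mk []
  mul_assoc := by
    intro a b c
    refine Quotient.inductionOn₃ a b c (fun x y z => ?_)
    show BM.mk ((x ++ y) ++ z) = BM.mk (x ++ (y ++ z))
    rw [List.append_assoc]
  one_mul := by
    intro a; refine Quotient.inductionOn a (fun x => ?_)
    show BM.mk ([] ++ x) = BM.mk x
    rw [List.nil_append]
  mul_one := by
    intro a; refine Quotient.inductionOn a (fun x => ?_)
    show BM.mk (x ++ []) = BM.mk x
    rw [List.append_nil]

theorem BM.mk_mul (a b : Word) : BM.mk a * BM.mk b = BM.mk (a ++ b) := rfl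

theorem BM.idem : SatisfiesSet BM ({([0], [0, 0])} : Set Eqn) := by
  intro e he φ
  simp only [Set.mem_singleton_iff] at he
  subst he
  simp only [List.map_cons, List.map_nil, List.prod_cons, List.prod_nil, mul_one]
  refine Quotient.inductionOn (φ 0) (fun x => ?_)
  show BM.mk x = BM.mk x * BM.mk x
  rw [BM.mk_mul]
  exact Quotient.sound (B.sq x)

theorem BM.eval (u : Word) : ((u.map (fun n => BM.mk [n])).prod : BM) = BM.mk u := by
  induction u with
  | nil => rfl
  | cons m t ih =>
    simp only [List.map_cons, List.prod_cons, ih, BM.mk_mul]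
    rfl

theorem band_of_sat {u v : Word}
    (h : Satisfies BM (u, v)) : B u v := by
  have := h (fun n => BM.mk [n])
  simp only [BM.eval] at this
  exact Quotient.exact this


/-- prefix of u before the first occurrence of z -/
def bf (z : ℕ) (u : Word) : Word := u.takeWhile (· ≠ z)

/-- suffix of u after the last occurrence of z -/
def al (z : ℕ) (u : Word) : Word := (u.reverse.takeWhile (· ≠ z)).reverse

theorem takeWhile_append_of_forall {p : ℕ → Bool} {A : Word} (B' : Word)
    (h : ∀ x ∈ A, p x) : (A ++ B').takeWhile p = A ++ B'.takeWhile p := by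
  induction A with
  | nil => simp
  | cons a t ih =>
    have hpa : p a := h a (by simp)
    simp only [List.cons_append, List.takeWhile_cons, hpa]
    simp [ih (fun x hx => h x (by simp [hx]))]

theorem takeWhile_append_of_mem {p : ℕ → Bool} {A : Word} (B' : Word)
    (h : ∃ x ∈ A, ¬ p x) : (A ++ B').takeWhile p = A.takeWhile p := by
  induction A with
  | nil => simp at h
  | cons a t ih =>
    by_cases hpa : p a
    · simp only [List.cons_append, List.takeWhile_cons, hpa]
      obtain ⟨x, hx, hpx⟩ := h
      simp at hx
      rcases hx with rfl | hx
      · exact absurd hpa hpx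
      · simp [ih ⟨x, hx, hpx⟩]
    · simp only [List.cons_append, List.takeWhile_cons]
      simp [hpa]

theorem bf_append_left {z : ℕ} {A : Word} (B' : Word) (h : z ∈ A) :
    bf z (A ++ B') = bf z A := by
  unfold bf
  exact takeWhile_append_of_mem B' ⟨z, h, by simp⟩

theorem bf_append_right {z : ℕ} {A : Word} (B' : Word) (h : z ∉ A) :
    bf z (A ++ B') = A ++ bf z B' := by
  unfold bf
  exact takeWhile_append_of_forall B' (fun x hx => by
    simp only [decide_eq_true_eq]
    rintro rfl; exact h hx)

theorem al_append_right {z : ℕ} {A : Word} (B' : Word) (h : z ∈ B') :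
    al z (A ++ B') = al z B' := by
  unfold al
  rw [List.reverse_append, takeWhile_append_of_mem _ ⟨z, by simp [h], by simp⟩]

theorem al_append_left {z : ℕ} {B' : Word} (A : Word) (h : z ∉ B') :
    al z (A ++ B') = al z A ++ B' := by
  unfold al
  rw [List.reverse_append, takeWhile_append_of_forall _ (fun x hx => by
    simp only [decide_eq_true_eq]
    rintro rfl; exact h (by simpa using hx))]
  simp

theorem Bbf {u v : Word} (h : B u v) (z : ℕ) (hz : z ∈ u) : B (bf z u) (bf z v) := by
  induction h with
  | sq w => rw [bf_append_left w hz]; exact B.refl _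
  | refl u => exact B.refl _
  | symm h ih => exact (ih ((Bcon h z).mpr hz)).symm
  | trans h1 h2 ih1 ih2 =>
    exact (ih1 hz).trans (ih2 ((Bcon h1 z).mp hz))
  | app h1 h2 ih1 ih2 =>
    rename_i a b c d
    by_cases ha : z ∈ a
    · rw [bf_append_left _ ha, bf_append_left _ ((Bcon h1 z).mp ha)]
      exact ih1 ha
    · have hc : z ∈ c := by rcases List.mem_append.mp hz with h | h; exact absurd h ha; exact h
      rw [bf_append_right _ ha, bf_append_right _ (fun hb => ha ((Bcon h1 z).mpr hb))]
      exact B.app h1 (ih2 hc)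

theorem Bal {u v : Word} (h : B u v) (z : ℕ) (hz : z ∈ u) : B (al z u) (al z v) := by
  induction h with
  | sq w => rw [al_append_right w hz]; exact B.refl _
  | refl u => exact B.refl _
  | symm h ih => exact (ih ((Bcon h z).mpr hz)).symm
  | trans h1 h2 ih1 ih2 =>
    exact (ih1 hz).trans (ih2 ((Bcon h1 z).mp hz))
  | app h1 h2 ih1 ih2 =>
    rename_i a b c d
    by_cases hc : z ∈ c
    · rw [al_append_right _ hc, al_append_right _ ((Bcon h2 z).mp hc)]
      exact ih2 hc
    · have ha : z ∈ a := by rcases List.mem_append.mp hz with h | h; exact h; exact absurd h hc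
      rw [al_append_left _ hc, al_append_left _ (fun hd => hc ((Bcon h2 z).mpr hd))]
      exact B.app (ih1 ha) h2

theorem split_at_mem {z : ℕ} : ∀ {u : Word}, z ∈ u →
    ∃ t, u = bf z u ++ [z] ++ t ∧ z ∉ bf z u := by
  intro u
  induction u with
  | nil => intro h; simp at h
  | cons m s ih =>
    intro hz
    by_cases hm : m = z
    · subst hm
      refine ⟨s, ?_, ?_⟩
      · unfold bf; simp
      · unfold bf; simp
    · have hzs : z ∈ s := by
        rcases List.mem_cons.mp hz with h | h
        · exact absurd h.symm hm
        · exact h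
      obtain ⟨t, ht, hnb⟩ := ih hzs
      have hbf : bf z (m :: s) = m :: bf z s := by
        unfold bf
        simp [List.takeWhile_cons, hm]
      refine ⟨t, ?_, ?_⟩
      · rw [hbf]
        simp only [List.cons_append]
        rw [← ht]
      · rw [hbf]
        intro hcon
        rcases List.mem_cons.mp hcon with h | h
        · exact hm h.symm
        · exact hnb h

theorem split_at_simple {z : ℕ} {u : Word} (h : u.count z = 1) :
    u = bf z u ++ [z] ++ al z u ∧ z ∉ bf z u ∧ z ∉ al z u := by
  have hz : z ∈ u := List.count_pos_iff.mp (by omega)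
  obtain ⟨t, ht, hnb⟩ := split_at_mem hz
  have hcnt : (bf z u).count z + 1 + t.count z = u.count z := by
    conv_rhs => rw [ht]
    simp [List.count_append]; omega
  have hb0 : (bf z u).count z = 0 := List.count_eq_zero_of_not_mem hnb
  have hznt : z ∉ t := by
    intro hmem
    have : 0 < t.count z := List.count_pos_iff.mpr hmem
    omega
  have hal : al z u = t := by
    rw [ht, al_append_left _ hznt]
    have : al z (bf z u ++ [z]) = [] := by
      unfold al
      rw [List.reverse_append]
      simp
    rw [this, List.nil_append]
  constructor
  · rw [hal] at *; exact ht
  · exact ⟨hnb, by rw [hal]; exact hznt⟩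

theorem headDecomp : ∀ (u : Word), u ≠ [] →
    ∃ P a Q, u = P ++ [a] ++ Q ∧ a ∉ P ∧ ∀ z ∈ Q, z ∈ P ∨ z = a := by
  intro u
  induction u using List.reverseRecOn with
  | nil => intro h; exact absurd rfl h
  | append_singleton t y ih =>
    intro _
    by_cases ht : t = []
    · subst ht; exact ⟨[], y, [], by simp, by simp, by simp⟩
    · by_cases hy : y ∈ t
      · obtain ⟨P, a, Q, heq, haP, hQ⟩ := ih ht
        refine ⟨P, a, Q ++ [y], by simp [heq], haP, ?_⟩
        intro z hz
        rcases List.mem_append.mp hz with h | h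
        · exact hQ z h
        · simp at h; subst h
          rw [heq] at hy
          rcases List.mem_append.mp hy with h2 | h2
          · rcases List.mem_append.mp h2 with h3 | h3
            · exact Or.inl h3
            · simp at h3; exact Or.inr h3
          · exact hQ z h2
      · exact ⟨t, y, [], by simp, hy, by simp⟩

theorem q1aux (z : ℕ) : ∀ u : Word,
    (u.map (fun m => if m = z then Q1.f else Q1.e)).prod =
      (if 2 ≤ u.count z then Q1.zero else if u.count z = 1 then Q1.f
       else if u.isEmpty then Q1.one else Q1.e) := by
  intro u
  induction u with
  | nil => simp; rfl
  | cons m t ih =>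
    simp only [List.map_cons, List.prod_cons, ih, List.count_cons, List.isEmpty_cons]
    have hmul : ∀ x y : Q1, x * y = Q1.mul x y := fun _ _ => rfl
    by_cases hm : m = z <;>
      rcases Nat.lt_or_ge (t.count z) 1 with h0 | h0
    · have h0' : t.count z = 0 := by omega
      by_cases he : t.isEmpty <;>
        simp [hm, h0', he, hmul] <;> decide
    · rcases Nat.lt_or_ge (t.count z) 2 with h1 | h1
      · have h1' : t.count z = 1 := by omega
        have hne : t.isEmpty = false := by
          cases t with
          | nil => simp at h1'
          | cons a s => rfl
        simp [hm, h1', hne, hmul]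
        decide
      · have h2 : (2 ≤ t.count z) := h1
        have hne : t.isEmpty = false := by
          cases t with
          | nil => simp at h2
          | cons a s => rfl
        simp [hm, h2, hne, hmul, Nat.le_add_right_of_le h2]
        · decide
    · have h0' : t.count z = 0 := by omega
      by_cases he : t.isEmpty <;>
        simp [hm, h0', he, hmul] <;> decide
    · rcases Nat.lt_or_ge (t.count z) 2 with h1 | h1
      · have h1' : t.count z = 1 := by omega
        have hne : t.isEmpty = false := by
          cases t with
          | nil => simp at h1'
          | cons a s => rfl
        simp [hm, h1', hne, hmul]
        decide
      · have hne : t.isEmpty = false := by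
          cases t with
          | nil => simp at h1
          | cons a s => rfl
        simp [hm, h1, hne, hmul]
        decide

theorem count_iff_of_q1 {u v : Word} (h : Satisfies Q1 (u, v)) :
    ∀ z, u.count z = 1 ↔ v.count z = 1 := by
  intro z
  have hz := h (fun m => if m = z then Q1.f else Q1.e)
  simp only [q1aux] at hz
  constructor <;> intro hc
  · by_contra hvc
    rcases Nat.lt_or_ge (v.count z) 1 with h0 | h0
    · have h0' : v.count z = 0 := by omega
      rw [hc] at hz
      by_cases he : v.isEmpty <;> simp [h0', he] at hz
    · have h2 : 2 ≤ v.count z := by omega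
      rw [hc] at hz
      simp [h2] at hz
  · by_contra huc
    rcases Nat.lt_or_ge (u.count z) 1 with h0 | h0
    · have h0' : u.count z = 0 := by omega
      rw [hc] at hz
      by_cases he : u.isEmpty <;> simp [h0', he] at hz
    · have h2 : 2 ≤ u.count z := by omega
      rw [hc] at hz
      simp [h2] at hz

theorem Dsound {u v : Word} (h : D u v) (M : Type) [Monoid M]
    (hS : SatisfiesSet M Gamma) (φ : ℕ → M) :
    (u.map φ).prod = (v.map φ).prod := by
  induction h with
  | r1 A w t B =>
    have hid := hS ([0, 4, 0], [0, 4, 0, 0]) (by simp [Gamma])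
      (fun k => if k = 0 then (w.map φ).prod else if k = 4 then (t.map φ).prod else 1)
    simp only [List.map_cons, List.map_nil, List.prod_cons, List.prod_nil, mul_one,
      if_pos, if_neg, reduceIte] at hid
    have h2 := congrArg (fun x => (A.map φ).prod * (x * (B.map φ).prod)) hid
    simpa [List.map_append, List.prod_append, mul_assoc] using h2
  | r2 A w t B =>
    have hid := hS ([0, 4, 0], [0, 0, 4, 0]) (by simp [Gamma])
      (fun k => if k = 0 then (w.map φ).prod else if k = 4 then (t.map φ).prod else 1)
    simp only [List.map_cons, List.map_nil, List.prod_cons, List.prod_nil, mul_one,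
      if_pos, if_neg, reduceIte] at hid
    have h2 := congrArg (fun x => (A.map φ).prod * (x * (B.map φ).prod)) hid
    simpa [List.map_append, List.prod_append, mul_assoc] using h2
  | r3 A w v B =>
    have hid := hS ([0, 1, 0, 1], [0, 0, 1, 1]) (by simp [Gamma])
      (fun k => if k = 0 then (w.map φ).prod else if k = 1 then (v.map φ).prod else 1)
    simp only [List.map_cons, List.map_nil, List.prod_cons, List.prod_nil, mul_one,
      if_pos, if_neg, reduceIte] at hid
    have h2 := congrArg (fun x => (A.map φ).prod * (x * (B.map φ).prod)) hid
    simpa [List.map_append, List.prod_append, mul_assoc] using h2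
  | refl u => rfl
  | symm _ ih => exact ih.symm
  | trans _ _ ih1 ih2 => exact ih1.trans ih2


theorem Dcast {u v u' v' : Word} (h : D u v) (hu : u = u') (hv : v = v') : D u' v' :=
  hu ▸ hv ▸ h

theorem T9Raux : ∀ (n : ℕ) (w X Y : Word), w.length ≤ n → (∀ z ∈ w, z ∈ Y) →
    D (X ++ w ++ w ++ Y) (X ++ w ++ Y) := by
  intro n
  induction n with
  | zero =>
    intro w X Y hlen _
    have : w = [] := List.eq_nil_of_length_eq_zero (Nat.le_zero.mp hlen)
    subst this; simpa using D.refl _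
  | succ n ih =>
    intro w X Y hlen hcov
    match w with
    | [] => simpa using D.refl _
    | [z] =>
      have hz : z ∈ Y := hcov z (by simp)
      obtain ⟨Y1, Y2, rfl⟩ := List.append_of_mem hz
      have h2 := (D.r2 X [z] Y1 Y2).symm
      exact Dcast h2 (by simp [List.append_assoc]) (by simp [List.append_assoc])
    | z :: y :: rest =>
      set w1 : Word := [z] with hw1
      set w2 : Word := y :: rest with hw2
      have hlen' : (z :: y :: rest).length ≤ n + 1 := hlen
      have hle1 : w1.length ≤ n := by
        simp only [hw1, List.length_singleton]
        simp only [List.length_cons] at hlen'; omega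
      have hle2 : w2.length ≤ n := by
        simp only [hw2, List.length_cons] at hlen' ⊢; omega
      have hc1 : ∀ a ∈ w1, a ∈ Y := fun a ha => hcov a (by simp [hw1] at ha; simp [ha])
      have hc2 : ∀ a ∈ w2, a ∈ Y := fun a ha => hcov a (by
        simp [hw2] at ha ⊢; rcases ha with h|h <;> simp [h])
      have step3 := D.r3 X w1 w2 Y
      have ih2 := ih w2 (X ++ w1 ++ w1) Y hle2 hc2
      have ih1 := ih w1 X (w2 ++ Y) hle1 (fun a ha => by simp [hc1 a ha])
      have e1 : D (X ++ (z :: y :: rest) ++ (z :: y :: rest) ++ Y)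
          (X ++ w1 ++ w1 ++ w2 ++ w2 ++ Y) :=
        Dcast step3 (by simp [hw1, hw2, List.append_assoc]) rfl
      have e2 : D (X ++ w1 ++ w1 ++ w2 ++ w2 ++ Y) (X ++ w1 ++ w1 ++ w2 ++ Y) :=
        Dcast ih2 (by simp [List.append_assoc]) (by simp [List.append_assoc])
      have e3 : D (X ++ w1 ++ w1 ++ w2 ++ Y) (X ++ w1 ++ w2 ++ Y) :=
        Dcast ih1 (by simp [List.append_assoc]) (by simp [List.append_assoc])
      exact Dcast ((e1.trans e2).trans e3) rfl (by simp [hw1, hw2, List.append_assoc])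

theorem T9R (w X Y : Word) (h : ∀ z ∈ w, z ∈ Y) :
    D (X ++ w ++ w ++ Y) (X ++ w ++ Y) :=
  T9Raux w.length w X Y le_rfl h

/-- In a fully right-covered region, band-equivalent words are Γ-interchangeable. -/
theorem Br {r s : Word} (h : B r s) :
    ∀ X Y : Word, (∀ z ∈ r, z ∈ Y) → D (X ++ r ++ Y) (X ++ s ++ Y) := by
  induction h with
  | sq w =>
    intro X Y hc
    exact Dcast (T9R w X Y hc).symm (by simp [List.append_assoc]) (by simp [List.append_assoc])
  | refl u => intro X Y _; exact D.refl _
  | symm h ih =>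
    intro X Y hc
    exact (ih X Y (fun z hz => hc z ((Bcon h z).mp hz))).symm
  | trans h1 h2 ih1 ih2 =>
    intro X Y hc
    exact (ih1 X Y hc).trans (ih2 X Y (fun z hz => hc z ((Bcon h1 z).mpr hz)))
  | app h1 h2 ih1 ih2 =>
    rename_i a b c d
    intro X Y hc
    have step1 : D ((X ++ a) ++ c ++ Y) ((X ++ a) ++ d ++ Y) :=
      ih2 (X ++ a) Y (fun z hz => hc z (by simp [hz]))
    have step2 : D (X ++ a ++ (d ++ Y)) (X ++ b ++ (d ++ Y)) :=
      ih1 X (d ++ Y) (fun z hz => by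
        have := hc z (by simp [hz])
        simp [this])
    have s1' : D (X ++ (a ++ c) ++ Y) (X ++ (a ++ d) ++ Y) :=
      Dcast step1 (by simp [List.append_assoc]) (by simp [List.append_assoc])
    have s2' : D (X ++ (a ++ d) ++ Y) (X ++ (b ++ d) ++ Y) :=
      Dcast step2 (by simp [List.append_assoc]) (by simp [List.append_assoc])
    exact s1'.trans s2'

theorem nil_of_B_nil {v : Word} (h : B [] v) : v = [] :=
  List.eq_nil_iff_forall_not_mem.mpr (fun z hz => by simpa using (Bcon h z).mpr hz)

theorem Smain : ∀ (n : ℕ) (u v X Y : Word),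
    u.toFinset.card ≤ n → B u v →
    (∀ z, z ∈ u → z ∉ X → z ∉ Y → (u.count z = 1 ↔ v.count z = 1)) →
    D (X ++ u ++ Y) (X ++ v ++ Y) := by
  intro n
  induction n with
  | zero =>
    intro u v X Y hcard hB _
    have hu : u = [] := by
      rcases u with _ | ⟨a, t⟩
      · rfl
      · exfalso
        have : a ∈ (a :: t).toFinset := by simp
        have h1 : 0 < (a :: t).toFinset.card := Finset.card_pos.mpr ⟨a, this⟩
        omega
    subst hu
    rw [nil_of_B_nil hB]
    exact D.refl _
  | succ n ih =>
    intro u v X Y hcard hB hsim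
    rcases eq_or_ne u [] with hu | hu
    · subst hu; rw [nil_of_B_nil hB]; exact D.refl _
    by_cases hex : ∃ z, z ∈ u ∧ z ∉ X ∧ z ∉ Y ∧ u.count z = 1
    · -- CASE II : a rigid simple letter exists; split there
      obtain ⟨z, hzu, hzX, hzY, hcu⟩ := hex
      have hcv : v.count z = 1 := (hsim z hzu hzX hzY).mp hcu
      obtain ⟨hud, hznb, hzna⟩ := split_at_simple hcu
      obtain ⟨hvd, hznbv, hznav⟩ := split_at_simple hcv
      have hB1 : B (bf z u) (bf z v) := Bbf hB z hzu
      have hB2 : B (al z u) (al z v) := Bal hB z hzu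
      have hsub1 : ∀ x ∈ bf z u, x ∈ u := fun x hx => by rw [hud]; simp [hx]
      have hsub2 : ∀ x ∈ al z u, x ∈ u := fun x hx => by rw [hud]; simp [hx]
      have hcard1 : (bf z u).toFinset.card ≤ n := by
        have hsub : (bf z u).toFinset ⊆ u.toFinset.erase z := by
          intro x hx
          simp only [List.mem_toFinset] at hx
          exact Finset.mem_erase.mpr ⟨fun hxz => hznb (hxz ▸ hx),
            List.mem_toFinset.mpr (hsub1 x hx)⟩
        have h1 := Finset.card_le_card hsub
        rw [Finset.card_erase_of_mem (List.mem_toFinset.mpr hzu)] at h1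
        omega
      have hcard2 : (al z u).toFinset.card ≤ n := by
        have hsub : (al z u).toFinset ⊆ u.toFinset.erase z := by
          intro x hx
          simp only [List.mem_toFinset] at hx
          exact Finset.mem_erase.mpr ⟨fun hxz => hzna (hxz ▸ hx),
            List.mem_toFinset.mpr (hsub2 x hx)⟩
        have h1 := Finset.card_le_card hsub
        rw [Finset.card_erase_of_mem (List.mem_toFinset.mpr hzu)] at h1
        omega
      have hcnt_u : ∀ x, x ≠ z → x ∉ al z u → u.count x = (bf z u).count x := by
        intro x hx1 hx2
        conv_lhs => rw [hud]
        simp [List.count_append, List.count_cons, List.count_eq_zero_of_not_mem hx2, hx1, hx1.symm]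
      have hcnt_u2 : ∀ x, x ≠ z → x ∉ bf z u → u.count x = (al z u).count x := by
        intro x hx1 hx2
        conv_lhs => rw [hud]
        simp [List.count_append, List.count_cons, List.count_eq_zero_of_not_mem hx2, hx1, hx1.symm]
      have hcnt_v : ∀ x, x ≠ z → x ∉ al z v → v.count x = (bf z v).count x := by
        intro x hx1 hx2
        conv_lhs => rw [hvd]
        simp [List.count_append, List.count_cons, List.count_eq_zero_of_not_mem hx2, hx1, hx1.symm]
      have hcnt_v2 : ∀ x, x ≠ z → x ∉ bf z v → v.count x = (al z v).count x := by
        intro x hx1 hx2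
        conv_lhs => rw [hvd]
        simp [List.count_append, List.count_cons, List.count_eq_zero_of_not_mem hx2, hx1, hx1.symm]
      have dA := ih (bf z u) (bf z v) X ([z] ++ al z u ++ Y) hcard1 hB1 (by
        intro x hxin hxX hxR
        have hxz : x ≠ z := fun h => hxR (by simp [h])
        have hxa : x ∉ al z u := fun h => hxR (by simp [h])
        have hxY : x ∉ Y := fun h => hxR (by simp [h])
        have hxav : x ∉ al z v := fun h => hxa ((Bcon hB2 x).mpr h)
        rw [← hcnt_u x hxz hxa, ← hcnt_v x hxz hxav]
        exact hsim x (hsub1 x hxin) hxX hxY)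
      have dB := ih (al z u) (al z v) (X ++ bf z v ++ [z]) Y hcard2 hB2 (by
        intro x hxin hxL hxY
        have hxz : x ≠ z := fun h => hxL (by simp [h])
        have hxbv : x ∉ bf z v := fun h => hxL (by simp [h])
        have hxX : x ∉ X := fun h => hxL (by simp [h])
        have hxb : x ∉ bf z u := fun h => hxbv ((Bcon hB1 x).mp h)
        rw [← hcnt_u2 x hxz hxb, ← hcnt_v2 x hxz hxbv]
        exact hsim x (hsub2 x hxin) hxX hxY)
      have dA' : D (X ++ u ++ Y) (X ++ bf z v ++ ([z] ++ al z u ++ Y)) :=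
        Dcast dA (by
          conv_rhs => rw [hud]
          simp [List.append_assoc]) rfl
      have dB' : D (X ++ bf z v ++ ([z] ++ al z u ++ Y)) (X ++ v ++ Y) :=
        Dcast dB (by simp [List.append_assoc]) (by
          conv_rhs => rw [hvd]
          simp [List.append_assoc])
      exact dA'.trans dB'
    · -- CASE I : no rigid simple letters
      push_neg at hex
      have hfree : ∀ z, z ∈ u → z ∉ X → z ∉ Y → u.count z ≠ 1 := hex
      have klem : ∀ w : Word, w.toFinset.card ≤ n + 1 →
          (∀ z, z ∈ w → z ∉ X → z ∉ Y → w.count z ≠ 1) →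
          D (X ++ w ++ Y) (X ++ w ++ w ++ Y) := by
        intro w hwc hwfree
        rcases eq_or_ne w [] with hw | hw
        · subst hw; simpa using D.refl _
        obtain ⟨P, a, Q, hdec, haP, hPQ⟩ := headDecomp w hw
        have haw : a ∈ w := by rw [hdec]; simp
        have hPw : ∀ x ∈ P, x ∈ w := fun x hx => by rw [hdec]; simp [hx]
        have hPcard : P.toFinset.card ≤ n := by
          have hsub : P.toFinset ⊆ w.toFinset.erase a := by
            intro x hx
            simp only [List.mem_toFinset] at hx
            exact Finset.mem_erase.mpr ⟨fun hxa => haP (hxa ▸ hx),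
              List.mem_toFinset.mpr (hPw x hx)⟩
          have h1 := Finset.card_le_card hsub
          rw [Finset.card_erase_of_mem (List.mem_toFinset.mpr haw)] at h1
          omega
        have d1 := ih P (P ++ P) X ([a] ++ Q ++ Y) hPcard (B.sq P) (by
          intro x hxin hxX hxR
          have hxa : x ≠ a := fun h => hxR (by simp [h])
          have hxQ : x ∉ Q := fun h => hxR (by simp [h])
          have hxY : x ∉ Y := fun h => hxR (by simp [h])
          have hwcnt : w.count x = P.count x := by
            conv_lhs => rw [hdec]
            simp [List.count_append, List.count_cons, List.count_eq_zero_of_not_mem hxQ, hxa, hxa.symm]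
          have hne := hwfree x (hPw x hxin) hxX hxY
          rw [hwcnt] at hne
          have hpos : 0 < P.count x := List.count_pos_iff.mpr hxin
          constructor
          · intro h; exact absurd h hne
          · intro h; exfalso; rw [List.count_append] at h; omega)
        have hQcov : ∀ x ∈ Q, x ∈ X ++ P ++ P ++ [a] := by
          intro x hx
          rcases hPQ x hx with h | h
          · simp [h]
          · simp [h]
        have d2 := Bl (B.sq Q) (X ++ P ++ P ++ [a]) Y hQcov
        have ha2 : a ∈ Q ∨ a ∈ X ∨ a ∈ Y := by
          by_contra hcon
          push_neg at hcon
          obtain ⟨haQ, haX, haY⟩ := hcon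
          have hwa : w.count a = 1 := by
            conv_lhs => rw [hdec]
            simp [List.count_append, List.count_cons, List.count_eq_zero_of_not_mem haQ,
              List.count_eq_zero_of_not_mem haP]
          exact hwfree a haw haX haY hwa
        have d3 : D (X ++ P ++ P ++ [a] ++ (Q ++ Q) ++ Y)
            (X ++ P ++ P ++ [a] ++ [a] ++ (Q ++ Q) ++ Y) := by
          rcases ha2 with hQ2 | hX2 | hY2
          · obtain ⟨Q1, Q2, hq⟩ := List.append_of_mem hQ2
            exact Dcast (D.r2 (X ++ P ++ P) [a] Q1 (Q2 ++ Q ++ Y))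
              (by rw [hq]; simp [List.append_assoc])
              (by rw [hq]; simp [List.append_assoc])
          · obtain ⟨X1, X2, hx⟩ := List.append_of_mem hX2
            exact Dcast (D.r1 X1 [a] (X2 ++ P ++ P) (Q ++ Q ++ Y))
              (by rw [hx]; simp [List.append_assoc])
              (by rw [hx]; simp [List.append_assoc])
          · obtain ⟨Y1, Y2, hy⟩ := List.append_of_mem hY2
            exact Dcast (D.r2 (X ++ P ++ P) [a] (Q ++ Q ++ Y1) Y2)
              (by rw [hy]; simp [List.append_assoc])
              (by rw [hy]; simp [List.append_assoc])
        have d4 := (D.r3 (X ++ P ++ P) [a] Q Y).symm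
        have d5 := (D.r3 X P ([a] ++ Q) Y).symm
        have c1 : D (X ++ w ++ Y) (X ++ (P ++ P) ++ ([a] ++ Q ++ Y)) :=
          Dcast d1 (by rw [hdec]; simp [List.append_assoc]) rfl
        have c2 : D (X ++ (P ++ P) ++ ([a] ++ Q ++ Y))
            (X ++ P ++ P ++ [a] ++ (Q ++ Q) ++ Y) :=
          Dcast d2 (by simp [List.append_assoc]) (by simp [List.append_assoc])
        have c4 : D (X ++ P ++ P ++ [a] ++ [a] ++ (Q ++ Q) ++ Y)
            (X ++ P ++ P ++ ([a] ++ Q) ++ ([a] ++ Q) ++ Y) :=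
          Dcast d4 (by simp [List.append_assoc]) (by simp [List.append_assoc])
        have c5 : D (X ++ P ++ P ++ ([a] ++ Q) ++ ([a] ++ Q) ++ Y)
            (X ++ w ++ w ++ Y) :=
          Dcast d5 (by simp [List.append_assoc]) (by rw [hdec]; simp [List.append_assoc])
        exact ((((c1.trans c2).trans d3).trans c4).trans c5)
      have hvu : ∀ x, x ∈ v ↔ x ∈ u := fun x => (Bcon hB x).symm
      have hfreev : ∀ z, z ∈ v → z ∉ X → z ∉ Y → v.count z ≠ 1 := by
        intro z hz hX hY hc1
        exact hfree z ((hvu z).mp hz) hX hY ((hsim z ((hvu z).mp hz) hX hY).mpr hc1)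
      have hvcard : v.toFinset.card ≤ n + 1 := by
        have : v.toFinset = u.toFinset := by
          ext x; simp [List.mem_toFinset, hvu x]
        rw [this]; exact hcard
      have k1 := klem u hcard hfree
      have k2 := klem v hvcard hfreev
      have m1 : D (X ++ u ++ (u ++ Y)) (X ++ v ++ (u ++ Y)) :=
        Br hB X (u ++ Y) (fun z hz => by simp [hz])
      have m2 : D ((X ++ v) ++ u ++ Y) ((X ++ v) ++ v ++ Y) :=
        Bl hB (X ++ v) Y (fun z hz => by simp [(Bcon hB z).mp hz])
      have m1' : D (X ++ u ++ u ++ Y) (X ++ v ++ u ++ Y) :=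
        Dcast m1 (by simp [List.append_assoc]) (by simp [List.append_assoc])
      have m2' : D (X ++ v ++ u ++ Y) (X ++ v ++ v ++ Y) :=
        Dcast m2 (by simp [List.append_assoc]) (by simp [List.append_assoc])
      exact ((k1.trans m1').trans m2').trans k2.symm

theorem completeness {u v : Word} (hB : B u v)
    (hsim : ∀ z, u.count z = 1 ↔ v.count z = 1) : D u v := by
  have := Smain u.toFinset.card u v [] [] le_rfl hB
    (fun z _ _ _ => hsim z)
  simpa using this

theorem q1_gamma : SatisfiesSet Q1 Gamma := by
  have key1 : ∀ x t : Q1, x * (t * (x * 1)) = x * (t * (x * (x * 1))) := by decide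
  have key2 : ∀ x t : Q1, x * (t * (x * 1)) = x * (x * (t * (x * 1))) := by decide
  have key3 : ∀ x y : Q1, x * (y * (x * (y * 1))) = x * (x * (y * (y * 1))) := by decide
  intro e he
  simp only [Gamma, Set.mem_insert_iff, Set.mem_singleton_iff] at he
  rcases he with rfl | rfl | rfl <;> intro φ <;>
    simp only [List.map_cons, List.map_nil, List.prod_cons, List.prod_nil]
  · exact key1 (φ 0) (φ 4)
  · exact key2 (φ 0) (φ 4)
  · exact key3 (φ 0) (φ 1)

theorem gamma_of_idem (M : Type) [Monoid M]
    (h : SatisfiesSet M ({([0], [0, 0])} : Set Eqn)) : SatisfiesSet M Gamma := by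
  have hid : ∀ m : M, m * m = m := by
    intro m
    have h2 := h ([0], [0, 0]) rfl (fun _ => m)
    simp only [List.map_cons, List.map_nil, List.prod_cons, List.prod_nil, mul_one] at h2
    exact h2.symm
  intro e he
  simp only [Gamma, Set.mem_insert_iff, Set.mem_singleton_iff] at he
  have hid2 : ∀ a b : M, a * b * (a * b) = a * b := fun a b => hid (a * b)
  rcases he with rfl | rfl | rfl <;> intro φ <;>
    simp only [List.map_cons, List.map_nil, List.prod_cons, List.prod_nil, mul_one] <;>
    simp only [← mul_assoc, hid]
  rw [mul_assoc (φ 0 * φ 1)]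
  exact hid2 (φ 0) (φ 1)

/-- An identity holds in `Q¹` and in every idempotent monoid iff
it is a consequence of `Γ = {xtx ≈ xtx², xtx ≈ x²tx, (xy)² ≈ x²y²}`;
i.e., `Q¹ ∨ B¹ = var Γ`. -/
theorem statement4 (e : Eqn) :
    (Satisfies Q1 e ∧
      ∀ (M : Type) [Monoid M], SatisfiesSet M ({([0], [0, 0])} : Set Eqn) → Satisfies M e) ↔
    Consequence Gamma e := by
  obtain ⟨u, v⟩ := e
  constructor
  · rintro ⟨hQ, hBand⟩
    have hband : B u v := band_of_sat (hBand BM BM.idem)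
    have hcnt : ∀ z, u.count z = 1 ↔ v.count z = 1 := count_iff_of_q1 hQ
    have hD : D u v := completeness hband hcnt
    intro M _ hS φ
    exact Dsound hD M hS φ
  · intro hC
    refine ⟨hC Q1 q1_gamma, ?_⟩
    intro M _ hIdem
    exact hC M (gamma_of_idem M hIdem)
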